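/- Let Σ be a finite type, n ∈ ℕ, and f : Σ → Set(ℤ^n) a function such that f(a) is semilinear for every a ∈ Σ. Extend f to a monoid morphism μ from words over Σ (under concatenation) to subsets of ℤ^n (under Minkowski sum), i.e., μ(a_1 a_2 ⋯ a_k) = f(a_1) + f(a_2) + ⋯ + f(a_k) and μ(ε) = {0}. Then for every regular language N over Σ, the set μ(N) = ⋃_{w ∈ N} μ(w) is semilinear. -/

import Mathlib

open scoped Pointwise

/-- A set `S ⊆ ℤ^n` is linear if it is the translate by some `b` of the
additive submonoid generated by a finite set `P`. -/
def IsLinearSet' {n : ℕ} (S : Set (Fin n → ℤ)) : Prop :=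
  ∃ (b : Fin n → ℤ) (P : Finset (Fin n → ℤ)),
    S = {x | ∃ p ∈ AddSubmonoid.closure (P : Set (Fin n → ℤ)), x = b + p}

/-- A set is semilinear if it is a finite union of linear sets. -/
def IsSemilinearSet' {n : ℕ} (S : Set (Fin n → ℤ)) : Prop :=
  ∃ (k : ℕ) (T : Fin k → Set (Fin n → ℤ)),
    (∀ i, IsLinearSet' (T i)) ∧ S = ⋃ i, T i

open scoped Computability

namespace ParikhAux
lemma isSemilinearSet_empty : IsSemilinearSet' (∅ : Set (Fin n → ℤ)) :=
  ⟨0, fun i => i.elim0, fun i => i.elim0, by simp⟩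

lemma _root_.IsLinearSet'.semi {S : Set (Fin n → ℤ)} (h : IsLinearSet' S) : IsSemilinearSet' S :=
  ⟨1, fun _ => S, fun _ => h, (Set.iUnion_const S).symm⟩

lemma isLinearSet_zero : IsLinearSet' ({0} : Set (Fin n → ℤ)) := by
  refine ⟨0, ∅, ?_⟩
  ext x
  simp [AddSubmonoid.closure_empty]

lemma isSemilinearSet_iUnion_lin {ι : Type*} [Fintype ι] (T : ι → Set (Fin n → ℤ))
    (h : ∀ i, IsLinearSet' (T i)) : IsSemilinearSet' (⋃ i, T i) := by
  let e := Fintype.equivFin ι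
  exact ⟨_, T ∘ e.symm, fun i => h _, (e.symm.surjective.iUnion_comp T).symm⟩

lemma isSemilinearSet_iUnion {ι : Type*} [Fintype ι] (S : ι → Set (Fin n → ℤ))
    (h : ∀ i, IsSemilinearSet' (S i)) : IsSemilinearSet' (⋃ i, S i) := by
  choose k T hT hS using h
  have : ⋃ i, S i = ⋃ x : Σ i, Fin (k i), T x.1 x.2 := by
    rw [Set.iUnion_sigma]
    exact Set.iUnion_congr fun i => hS i
  rw [this]
  exact isSemilinearSet_iUnion_lin _ fun x => hT _ _

lemma _root_.IsSemilinearSet'.union {S S' : Set (Fin n → ℤ)} (h : IsSemilinearSet' S)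
    (h' : IsSemilinearSet' S') : IsSemilinearSet' (S ∪ S') := by
  rw [Set.union_eq_iUnion]
  exact isSemilinearSet_iUnion _ (by rintro (_|_) <;> simpa)

lemma coe_closure_union (A B : Set (Fin n → ℤ)) :
    ((AddSubmonoid.closure (A ∪ B) : AddSubmonoid (Fin n → ℤ)) : Set (Fin n → ℤ))
      = (AddSubmonoid.closure A : Set (Fin n → ℤ)) + (AddSubmonoid.closure B : Set (Fin n → ℤ)) := by
  rw [AddSubmonoid.closure_union]
  ext x
  simp only [SetLike.mem_coe, AddSubmonoid.mem_sup, Set.mem_add]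

lemma _root_.IsLinearSet'.add {S S' : Set (Fin n → ℤ)} (h : IsLinearSet' S) (h' : IsLinearSet' S') :
    IsLinearSet' (S + S') := by
  classical
  obtain ⟨b, P, rfl⟩ := h; obtain ⟨b', P', rfl⟩ := h'
  refine ⟨b + b', P ∪ P', ?_⟩
  ext x
  rw [Set.mem_add]
  constructor
  · rintro ⟨y, ⟨p, hp, rfl⟩, z, ⟨p', hp', rfl⟩, rfl⟩
    refine ⟨p + p', ?_, by abel⟩
    have h2 : p + p' ∈ (AddSubmonoid.closure (↑P : Set (Fin n → ℤ)) : Set (Fin n → ℤ))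
        + (AddSubmonoid.closure (↑P' : Set (Fin n → ℤ)) : Set (Fin n → ℤ)) :=
      Set.add_mem_add hp hp'
    rw [← coe_closure_union, ← Finset.coe_union] at h2
    exact h2
  · rintro ⟨q, hq, rfl⟩
    rw [Finset.coe_union] at hq
    have h2 : q ∈ (AddSubmonoid.closure ((P : Set (Fin n → ℤ))) : Set (Fin n → ℤ))
        + (AddSubmonoid.closure ((P' : Set (Fin n → ℤ))) : Set (Fin n → ℤ)) := by
      rw [← coe_closure_union]; exact hq
    obtain ⟨p, hp, p', hp', rfl⟩ := h2
    exact ⟨b + p, ⟨p, hp, rfl⟩, b' + p', ⟨p', hp', rfl⟩, by beta_reduce; abel⟩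

lemma _root_.IsSemilinearSet'.add {S S' : Set (Fin n → ℤ)} (h : IsSemilinearSet' S)
    (h' : IsSemilinearSet' S') : IsSemilinearSet' (S + S') := by
  obtain ⟨k, T, hT, rfl⟩ := h; obtain ⟨l, U, hU, rfl⟩ := h'
  rw [Set.iUnion_add]
  refine isSemilinearSet_iUnion _ fun i => ?_
  rw [Set.add_iUnion]
  exact isSemilinearSet_iUnion_lin _ fun j => (hT i).add (hU j)



lemma aux_nsmul {b : Fin n → ℤ} {P : Set (Fin n → ℤ)} :
    ∀ (k : ℕ) {t : Fin n → ℤ}, t ∈ AddSubmonoid.closure P →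
      b + (k • b + t) ∈ AddSubmonoid.closure {x | ∃ p ∈ AddSubmonoid.closure P, x = b + p}
  | 0, t, ht => by
      have h : b + (0 • b + t) = b + t := by simp
      rw [h]
      exact AddSubmonoid.subset_closure ⟨t, ht, rfl⟩
  | (k+1), t, ht => by
      have heq : b + ((k+1) • b + t) = (b + 0) + (b + (k • b + t)) := by
        rw [succ_nsmul]; abel
      rw [heq]
      exact add_mem (AddSubmonoid.subset_closure ⟨0, zero_mem _, rfl⟩) (aux_nsmul k ht)

lemma coe_closure_linear (b : Fin n → ℤ) (P : Finset (Fin n → ℤ)) :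
    ((AddSubmonoid.closure {x | ∃ p ∈ AddSubmonoid.closure ((P : Set (Fin n → ℤ))), x = b + p}
        : AddSubmonoid (Fin n → ℤ)) : Set (Fin n → ℤ))
      = {0} ∪ {x | ∃ p ∈ AddSubmonoid.closure
          ((insert b P : Finset (Fin n → ℤ)) : Set (Fin n → ℤ)), x = b + p} := by
  classical
  ext x
  constructor
  · intro hx
    rw [SetLike.mem_coe] at hx
    obtain ⟨l, hl, rfl⟩ := AddSubmonoid.exists_list_of_mem_closure hx
    clear hx
    induction l with
    | nil => left; simp
    | cons a l ih =>
      obtain ⟨p₀, hp₀, rfl⟩ := hl a List.mem_cons_self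
      have hl' : ∀ y ∈ l, ∃ p ∈ AddSubmonoid.closure ((P : Set (Fin n → ℤ))), y = b + p :=
        fun y hy => hl y (List.mem_cons_of_mem _ hy)
      have hmono : AddSubmonoid.closure ((P : Set (Fin n → ℤ)))
          ≤ AddSubmonoid.closure ((insert b P : Finset (Fin n → ℤ)) : Set (Fin n → ℤ)) :=
        AddSubmonoid.closure_mono (by rw [Finset.coe_insert]; exact Set.subset_insert _ _)
      have hb : b ∈ AddSubmonoid.closure ((insert b P : Finset (Fin n → ℤ)) : Set (Fin n → ℤ)) :=
        AddSubmonoid.subset_closure (by simp)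
      rcases ih hl' with h0 | ⟨p, hp, hsum⟩
      · rw [Set.mem_singleton_iff] at h0
        right
        exact ⟨p₀, hmono hp₀, by rw [List.sum_cons, h0, add_zero]⟩
      · right
        refine ⟨p₀ + (b + p), add_mem (hmono hp₀) (add_mem hb hp), ?_⟩
        rw [List.sum_cons, hsum]; abel
  · rintro (h | ⟨p, hp, rfl⟩)
    · rw [Set.mem_singleton_iff] at h
      rw [h]
      exact zero_mem _
    · rw [Finset.coe_insert, Set.insert_eq] at hp
      have h2 : p ∈ (AddSubmonoid.closure ({b} : Set (Fin n → ℤ)) : Set (Fin n → ℤ))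
          + (AddSubmonoid.closure ((P : Set (Fin n → ℤ))) : Set (Fin n → ℤ)) := by
        rw [← coe_closure_union]; exact hp
      obtain ⟨s, hs, t, ht, rfl⟩ := h2
      rw [SetLike.mem_coe] at hs ht
      obtain ⟨k, rfl⟩ := AddSubmonoid.mem_closure_singleton.1 hs
      exact aux_nsmul k ht

lemma _root_.IsLinearSet'.semiClosure {S : Set (Fin n → ℤ)} (h : IsLinearSet' S) :
    IsSemilinearSet' ((AddSubmonoid.closure S : AddSubmonoid (Fin n → ℤ)) : Set (Fin n → ℤ)) := by
  obtain ⟨b, P, rfl⟩ := h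
  rw [coe_closure_linear]
  exact isLinearSet_zero.semi.union (IsLinearSet'.semi ⟨b, insert b P, rfl⟩)

lemma closure_iUnion_fin :
    ∀ (k : ℕ) (T : Fin k → Set (Fin n → ℤ)), (∀ i, IsLinearSet' (T i)) →
      IsSemilinearSet' ((AddSubmonoid.closure (⋃ i, T i) : AddSubmonoid (Fin n → ℤ))
        : Set (Fin n → ℤ)) := by
  intro k
  induction k with
  | zero =>
    intro T hT
    rw [Set.iUnion_of_empty, AddSubmonoid.closure_empty, AddSubmonoid.coe_bot]
    exact isLinearSet_zero.semi
  | succ k ih =>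
    intro T hT
    have hsplit : ⋃ i, T i = T 0 ∪ ⋃ i : Fin k, T i.succ := by
      ext x
      simp only [Set.mem_iUnion, Set.mem_union]
      exact Fin.exists_fin_succ
    rw [hsplit, coe_closure_union]
    exact ((hT 0).semiClosure).add (ih _ fun i => hT i.succ)

lemma _root_.IsSemilinearSet'.closure {S : Set (Fin n → ℤ)} (h : IsSemilinearSet' S) :
    IsSemilinearSet' ((AddSubmonoid.closure S : AddSubmonoid (Fin n → ℤ)) : Set (Fin n → ℤ)) := by
  obtain ⟨k, T, hT, rfl⟩ := h
  exact closure_iUnion_fin k T hT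

section Lang

variable {α : Type} {n : ℕ}

def mu (f : α → Set (Fin n → ℤ)) (w : List α) : Set (Fin n → ℤ) := (w.map f).sum

def g (f : α → Set (Fin n → ℤ)) (L : Language α) : Set (Fin n → ℤ) := ⋃ w ∈ L, mu f w

lemma mu_append (f : α → Set (Fin n → ℤ)) (u v : List α) :
    mu f (u ++ v) = mu f u + mu f v := by
  simp [mu]

lemma mem_g {f : α → Set (Fin n → ℤ)} {L : Language α} {x} :
    x ∈ g f L ↔ ∃ w ∈ L, x ∈ mu f w := by
  simp [g]

lemma g_add (f : α → Set (Fin n → ℤ)) (L M : Language α) : g f (L + M) = g f L ∪ g f M := by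
  ext x
  simp only [Set.mem_union, mem_g, Language.mem_add]
  constructor
  · rintro ⟨w, hw | hw, hx⟩
    · exact Or.inl ⟨w, hw, hx⟩
    · exact Or.inr ⟨w, hw, hx⟩
  · rintro (⟨w, hw, hx⟩ | ⟨w, hw, hx⟩)
    · exact ⟨w, Or.inl hw, hx⟩
    · exact ⟨w, Or.inr hw, hx⟩

lemma g_mul (f : α → Set (Fin n → ℤ)) (L M : Language α) : g f (L * M) = g f L + g f M := by
  ext x
  rw [Set.mem_add]
  constructor
  · intro hx
    obtain ⟨w, hw, hxw⟩ := mem_g.1 hx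
    obtain ⟨u, hu, v, hv, rfl⟩ := Language.mem_mul.1 hw
    rw [mu_append, Set.mem_add] at hxw
    obtain ⟨y, hy, z, hz, rfl⟩ := hxw
    exact ⟨y, mem_g.2 ⟨u, hu, hy⟩, z, mem_g.2 ⟨v, hv, hz⟩, rfl⟩
  · rintro ⟨y, hy, z, hz, rfl⟩
    obtain ⟨u, hu, hy⟩ := mem_g.1 hy
    obtain ⟨v, hv, hz⟩ := mem_g.1 hz
    exact mem_g.2 ⟨u ++ v, Language.append_mem_mul hu hv,
      by rw [mu_append]; exact Set.add_mem_add hy hz⟩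

lemma mu_flatten (f : α → Set (Fin n → ℤ)) :
    ∀ (ws : List (List α)), mu f ws.flatten = (ws.map (mu f)).sum
  | [] => rfl
  | w :: ws => by
      rw [List.flatten_cons, mu_append, List.map_cons, List.sum_cons, mu_flatten f ws]

lemma mem_listSum {A : AddSubmonoid (Fin n → ℤ)} :
    ∀ {Ss : List (Set (Fin n → ℤ))}, (∀ S ∈ Ss, S ⊆ (A : Set (Fin n → ℤ))) →
      ∀ {x}, x ∈ Ss.sum → x ∈ A
  | [], _, x, hx => by
      rw [List.sum_nil, Set.mem_zero] at hx
      rw [hx]; exact zero_mem _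
  | S :: Ss, h, x, hx => by
      rw [List.sum_cons, Set.mem_add] at hx
      obtain ⟨y, hy, z, hz, rfl⟩ := hx
      exact add_mem (h S (by simp) hy)
        (mem_listSum (fun S' hS' => h S' (by simp [hS'])) hz)

lemma g_kstar (f : α → Set (Fin n → ℤ)) (L : Language α) :
    g f (L∗) = ((AddSubmonoid.closure (g f L) : AddSubmonoid (Fin n → ℤ))
      : Set (Fin n → ℤ)) := by
  ext x
  constructor
  · intro hx
    obtain ⟨w, hw, hxw⟩ := mem_g.1 hx
    obtain ⟨ws, rfl, hws⟩ := Language.mem_kstar.1 hw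
    rw [mu_flatten] at hxw
    refine mem_listSum ?_ hxw
    rintro S hS
    obtain ⟨u, humem, rfl⟩ := List.mem_map.1 hS
    intro y hy
    exact AddSubmonoid.subset_closure (mem_g.2 ⟨u, hws u humem, hy⟩)
  · intro hx
    rw [SetLike.mem_coe] at hx
    let A : AddSubmonoid (Fin n → ℤ) :=
      { carrier := g f (L∗)
        zero_mem' := mem_g.2 ⟨[], Language.nil_mem_kstar L, Set.mem_zero.2 rfl⟩
        add_mem' := by
          rintro a b ha hb
          obtain ⟨u, hu, ha⟩ := mem_g.1 ha
          obtain ⟨v, hv, hb⟩ := mem_g.1 hb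
          refine mem_g.2 ⟨u ++ v, ?_, by rw [mu_append]; exact Set.add_mem_add ha hb⟩
          have := Language.append_mem_mul hu hv
          rwa [kstar_mul_kstar] at this }
    have hle : AddSubmonoid.closure (g f L) ≤ A := by
      refine AddSubmonoid.closure_le.2 ?_
      intro y hy
      obtain ⟨w, hw, hyw⟩ := mem_g.1 hy
      exact mem_g.2 ⟨w, Language.mem_kstar.2 ⟨[w], by simp, by simpa⟩, hyw⟩
    exact hle hx

end Lang

section Auto

variable {α : Type} {σ : Type} (M : DFA α σ)

def W (M : DFA α σ) (X : Set σ) : σ → σ → List α → Prop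
  | p, q, [] => p = q
  | p, q, [a] => M.step p a = q
  | p, q, a :: b :: w => M.step p a ∈ X ∧ W M X (M.step p a) q (b :: w)

lemma W_nil {X : Set σ} {p q} : W M X p q [] ↔ p = q := Iff.rfl

lemma W_single {X : Set σ} {p q a} : W M X p q [a] ↔ M.step p a = q := Iff.rfl

lemma W_cons {X : Set σ} {p q a} {w : List α} (hw : w ≠ []) :
    W M X p q (a :: w) ↔ M.step p a ∈ X ∧ W M X (M.step p a) q w := by
  cases w with
  | nil => exact absurd rfl hw
  | cons b w => exact Iff.rfl

lemma W_mono {X Y : Set σ} (hXY : X ⊆ Y) {q : σ} :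
    ∀ {w : List α} {p}, W M X p q w → W M Y p q w := by
  intro w
  induction w with
  | nil => intro p h; exact h
  | cons a w ih =>
    intro p h
    cases w with
    | nil => exact h
    | cons b w =>
      obtain ⟨h1, h2⟩ := h
      exact ⟨hXY h1, ih h2⟩

lemma W_eval {q : σ} : ∀ {w : List α} {p}, W M Set.univ p q w ↔ M.evalFrom p w = q := by
  intro w
  induction w with
  | nil => intro p; simp [W_nil, DFA.evalFrom_nil, eq_comm]
  | cons a w ih =>
    intro p
    cases w with
    | nil => simp [W_single, DFA.evalFrom_singleton]
    | cons b w =>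
      rw [W_cons M (by simp)]
      simp only [Set.mem_univ, true_and]
      rw [ih]
      rfl

lemma W_append {X : Set σ} {r q : σ} :
    ∀ {u : List α} {p} {v : List α}, W M X p r u → W M X r q v →
      (u = [] ∨ v = [] ∨ r ∈ X) → W M X p q (u ++ v) := by
  intro u
  induction u with
  | nil =>
    intro p v h1 h2 _
    rw [W_nil] at h1
    rw [h1]
    exact h2
  | cons a u ih =>
    intro p v h1 h2 hcond
    cases u with
    | nil =>
      rw [W_single] at h1
      cases v with
      | nil =>
        rw [W_nil] at h2
        rw [List.append_nil]
        rw [W_single, h1, h2]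
      | cons c v =>
        have hr : r ∈ X := by
          rcases hcond with h | h | h
          · exact absurd h (by simp)
          · exact absurd h (by simp)
          · exact h
        show W M X p q (a :: (c :: v))
        rw [W_cons M (by simp), h1]
        exact ⟨hr, h2⟩
    | cons b u' =>
      rw [W_cons M (by simp)] at h1
      have hcond' : (b :: u' : List α) = [] ∨ v = [] ∨ r ∈ X := by
        rcases hcond with h | h | h
        · exact absurd h (by simp)
        · exact Or.inr (Or.inl h)
        · exact Or.inr (Or.inr h)
      have := ih h1.2 h2 hcond'
      rw [List.cons_append, W_cons M (by simp)]
      exact ⟨h1.1, this⟩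

lemma W_split {X : Set σ} {r q : σ} :
    ∀ {w : List α} {p}, W M (insert r X) p q w →
      W M X p q w ∨ ∃ u v, w = u ++ v ∧ u ≠ [] ∧ v ≠ [] ∧ W M X p r u ∧
        W M (insert r X) r q v := by
  intro w
  induction w with
  | nil => intro p h; exact Or.inl h
  | cons a w ih =>
    intro p h
    cases w with
    | nil => exact Or.inl h
    | cons b w' =>
      rw [W_cons M (by simp)] at h
      obtain ⟨hmem, hW⟩ := h
      by_cases hr : M.step p a = r
      · exact Or.inr ⟨[a], b :: w', rfl, by simp, by simp,
          (W_single M).2 hr, hr ▸ hW⟩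
      · have hX : M.step p a ∈ X := by
          rcases Set.mem_insert_iff.1 hmem with h | h
          · exact absurd h hr
          · exact h
        rcases ih hW with h' | ⟨u, v, heq, hu, hv, h1, h2⟩
        · exact Or.inl ((W_cons M (by simp)).2 ⟨hX, h'⟩)
        · refine Or.inr ⟨a :: u, v, by rw [heq]; rfl, by simp, hv, ?_, h2⟩
          rw [W_cons M hu]
          exact ⟨hX, h1⟩

def Wl (M : DFA α σ) (X : Set σ) (p q : σ) : Language α := {w | W M X p q w}

lemma mem_Wl {X : Set σ} {p q : σ} {w : List α} : w ∈ Wl M X p q ↔ W M X p q w := Iff.rfl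

lemma W_insert_forward {X : Set σ} {r q : σ} :
    ∀ (m : ℕ) (w : List α), w.length ≤ m → ∀ p, W M (insert r X) p q w →
      W M X p q w ∨ w ∈ Wl M X p r * (Wl M X r r)∗ * Wl M X r q := by
  intro m
  induction m with
  | zero =>
    intro w hw p h
    rcases W_split M h with h' | ⟨u, v, rfl, hu, hv, _, _⟩
    · exact Or.inl h'
    · exfalso
      cases u with
      | nil => exact hu rfl
      | cons c u => simp at hw
  | succ m ih =>
    intro w hw p h
    rcases W_split M h with h' | ⟨u, v, rfl, hu, hv, h1, h2⟩
    · exact Or.inl h'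
    · have hvlen : v.length ≤ m := by
        cases u with
        | nil => exact absurd rfl hu
        | cons c u => simp [List.length_append] at hw ⊢; omega
      rcases ih v hvlen r h2 with h3 | h3
      · right
        have := Language.append_mem_mul
          (Language.append_mem_mul (show u ∈ Wl M X p r from h1)
            (Language.nil_mem_kstar (Wl M X r r)))
          (show v ∈ Wl M X r q from h3)
        simpa using this
      · right
        obtain ⟨y, hy, t, ht, rfl⟩ := Language.mem_mul.1 h3
        have hy' : y ∈ (Wl M X r r)∗ :=
          (mul_kstar_le_kstar : Wl M X r r * (Wl M X r r)∗ ≤ _) hy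
        have := Language.append_mem_mul (Language.append_mem_mul h1 hy') ht
        rwa [List.append_assoc] at this

lemma W_kstar {X : Set σ} {r : σ} {z : List α} (hz : z ∈ (Wl M X r r)∗) :
    W M (insert r X) r r z := by
  obtain ⟨zs, rfl, hzs⟩ := Language.mem_kstar.1 hz
  clear hz
  induction zs with
  | nil => exact (W_nil M).2 rfl
  | cons s zs ih =>
    rw [List.flatten_cons]
    refine W_append M (W_mono M (Set.subset_insert r X) (hzs s (by simp)))
      (ih fun y hy => hzs y (by simp [hy])) ?_
    exact Or.inr (Or.inr (Set.mem_insert r X))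

lemma Wl_insert (X : Set σ) (r p q : σ) :
    Wl M (insert r X) p q =
      Wl M X p q + Wl M X p r * (Wl M X r r)∗ * Wl M X r q := by
  ext w
  rw [Language.mem_add, mem_Wl]
  constructor
  · intro h
    exact W_insert_forward M w.length w le_rfl p h
  · rintro (h | h)
    · exact W_mono M (Set.subset_insert r X) h
    · obtain ⟨y, hy, v, hv, rfl⟩ := Language.mem_mul.1 h
      obtain ⟨u, hu, z, hz, rfl⟩ := Language.mem_mul.1 hy
      have h1 : W M (insert r X) p r u := W_mono M (Set.subset_insert r X) hu
      have h2 : W M (insert r X) r r z := W_kstar M hz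
      have h3 : W M (insert r X) r q v := W_mono M (Set.subset_insert r X) hv
      have h12 : W M (insert r X) p r (u ++ z) :=
        W_append M h1 h2 (Or.inr (Or.inr (Set.mem_insert r X)))
      exact W_append M h12 h3 (Or.inr (Or.inr (Set.mem_insert r X)))

lemma W_empty {p q : σ} {w : List α} :
    W M (∅ : Set σ) p q w ↔ (w = [] ∧ p = q) ∨ ∃ a, M.step p a = q ∧ w = [a] := by
  cases w with
  | nil => simp [W_nil]
  | cons a w =>
    cases w with
    | nil => simp [W_single, eq_comm]
    | cons b w =>
      rw [W_cons M (by simp)]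
      simp

end Auto

section Main

variable {α : Type} [Fintype α] {n : ℕ}

lemma g_Wl_empty (f : α → Set (Fin n → ℤ)) (hf : ∀ a, IsSemilinearSet' (f a))
    {σ : Type} (M : DFA α σ) (p q : σ) :
    IsSemilinearSet' (g f (Wl M (∅ : Set σ) p q)) := by
  classical
  have heq : g f (Wl M (∅ : Set σ) p q)
      = (⋃ (_ : p = q), ({0} : Set (Fin n → ℤ)))
        ∪ ⋃ (a : α) (_ : M.step p a = q), f a := by
    ext x
    simp only [Set.mem_union, Set.mem_iUnion, mem_g, mem_Wl, W_empty]
    constructor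
    · rintro ⟨w, (⟨rfl, rfl⟩ | ⟨a, ha, rfl⟩), hx⟩
      · left; exact ⟨rfl, by simpa [mu] using hx⟩
      · right; exact ⟨a, ha, by simpa [mu] using hx⟩
    · rintro (⟨rfl, hx⟩ | ⟨a, ha, hx⟩)
      · exact ⟨[], Or.inl ⟨rfl, rfl⟩, by simpa [mu] using hx⟩
      · exact ⟨[a], Or.inr ⟨a, ha, rfl⟩, by simpa [mu] using hx⟩
  rw [heq]
  refine IsSemilinearSet'.union ?_ ?_
  · by_cases h : p = q
    · simpa [h] using isLinearSet_zero.semi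
    · simpa [h] using isSemilinearSet_empty
  · refine isSemilinearSet_iUnion _ fun a => ?_
    by_cases h : M.step p a = q
    · simpa [h] using hf a
    · simpa [h] using isSemilinearSet_empty

lemma g_Wl_semi (f : α → Set (Fin n → ℤ)) (hf : ∀ a, IsSemilinearSet' (f a))
    {σ : Type} (M : DFA α σ) (X : Finset σ) :
    ∀ p q, IsSemilinearSet' (g f (Wl M (↑X : Set σ) p q)) := by
  classical
  induction X using Finset.induction_on with
  | empty =>
    intro p q
    rw [Finset.coe_empty]
    exact g_Wl_empty f hf M p q
  | @insert r X hr ih =>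
    intro p q
    rw [Finset.coe_insert, Wl_insert, g_add, g_mul, g_mul, g_kstar]
    exact (ih p q).union (((ih p r).add ((ih r r).closure)).add (ih r q))

theorem isSemilinearSet_image_of_regular'
    (f : α → Set (Fin n → ℤ)) (hf : ∀ a, IsSemilinearSet' (f a))
    (N : Language α) (hN : N.IsRegular) :
    IsSemilinearSet' (⋃ w ∈ N, ((w.map f).sum : Set (Fin n → ℤ))) := by
  classical
  obtain ⟨σ, instσ, M, rfl⟩ := hN
  haveI : Fintype σ := instσ
  have hacc : (⋃ w ∈ M.accepts, ((w.map f).sum : Set (Fin n → ℤ)))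
      = ⋃ (q : σ), ⋃ (_ : q ∈ M.accept), g f (Wl M Set.univ M.start q) := by
    ext x
    simp only [Set.mem_iUnion, mem_g, mem_Wl]
    constructor
    · rintro ⟨w, hw, hx⟩
      rw [DFA.mem_accepts] at hw
      exact ⟨M.eval w, hw, w, (W_eval M).2 rfl, hx⟩
    · rintro ⟨q, hq, w, hW, hx⟩
      have heval := (W_eval M).1 hW
      refine ⟨w, ?_, hx⟩
      rw [DFA.mem_accepts]
      show M.evalFrom M.start w ∈ M.accept
      rw [heval]
      exact hq
  rw [hacc]
  refine isSemilinearSet_iUnion _ fun q => ?_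
  by_cases hq : q ∈ M.accept
  · have : (⋃ (_ : q ∈ M.accept), g f (Wl M Set.univ M.start q))
        = g f (Wl M Set.univ M.start q) := by simp [hq]
    rw [this, ← Finset.coe_univ]
    exact g_Wl_semi f hf M Finset.univ M.start q
  · simpa [hq] using isSemilinearSet_empty

end Main

end ParikhAux

/-- The extension of a letter-to-semilinear-set assignment `f` to a monoid
morphism `μ` from words (under concatenation) to subsets of `ℤ^n` (under
Minkowski sum, with identity `{0}`): `μ w = f a_1 + ⋯ + f a_k`.
The image `μ(N) = ⋃_{w ∈ N} μ(w)` of any regular language `N` is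
semilinear. -/
theorem isSemilinearSet_image_of_regular
    {α : Type} [Fintype α] {n : ℕ}
    (f : α → Set (Fin n → ℤ)) (hf : ∀ a, IsSemilinearSet' (f a))
    (N : Language α) (hN : N.IsRegular) :
    IsSemilinearSet' (⋃ w ∈ N, ((w.map f).sum : Set (Fin n → ℤ))) :=
  ParikhAux.isSemilinearSet_image_of_regular' f hf N hN
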